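/- Lower spectral bound on the regularity radius: for nonsingular A and Δ ≥ 0, if δ < 1/ρ(|A⁻¹|Δ), then the interval matrix [A − δΔ, A + δΔ] is regular; hence d(A, Δ) ≥ 1/ρ(|A⁻¹|Δ). -/

import Mathlib

open Matrix
open scoped ENNReal NNReal

noncomputable def regRad {n : ℕ} (A Δ : Matrix (Fin n) (Fin n) ℝ) : ℝ≥0∞ :=
  ⨅ δ ∈ {δ : ℝ≥0 | ∃ M : Matrix (Fin n) (Fin n) ℝ,
      (∀ i j, |M i j - A i j| ≤ (δ : ℝ) * Δ i j) ∧ M.det = 0},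
    (δ : ℝ≥0∞)

noncomputable def specRad {n : ℕ} (M : Matrix (Fin n) (Fin n) ℝ) : ℝ :=
  sSup {r : ℝ | ∃ μ ∈ spectrum ℂ (M.map (fun x => (x : ℂ))), r = ‖μ‖}

section Aux

open Filter Topology

attribute [local instance] Matrix.linftyOpNormedAddCommGroup Matrix.linftyOpNormedRing
  Matrix.linftyOpNormedAlgebra

variable {n : ℕ}

private lemma nnnorm_mapC (M : Matrix (Fin n) (Fin n) ℝ) :
    ‖M.map (fun x => (x : ℂ))‖₊ = ‖M‖₊ := by
  rw [Matrix.linfty_opNNNorm_def, Matrix.linfty_opNNNorm_def]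
  congr 1
  funext i
  simp [Matrix.map_apply]

private lemma row_sum_le_nnnorm (M : Matrix (Fin n) (Fin n) ℝ) (i : Fin n) :
    ∑ j, ‖M i j‖₊ ≤ ‖M‖₊ := by
  rw [Matrix.linfty_opNNNorm_def]
  exact Finset.le_sup (f := fun i => ∑ j, ‖M i j‖₊) (Finset.mem_univ i)

private lemma specRad_bddAbove (M : Matrix (Fin n) (Fin n) ℝ) :
    BddAbove {r : ℝ | ∃ μ ∈ spectrum ℂ (M.map (fun x => (x : ℂ))), r = ‖μ‖} := by
  rcases Nat.eq_zero_or_pos n with h0 | hpos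
  · subst h0
    have : ∀ r : ℝ, r ∉ {r : ℝ | ∃ μ ∈ spectrum ℂ (M.map (fun x => (x : ℂ))), r = ‖μ‖} := by
      rintro r ⟨μ, hμ, -⟩
      exact (spectrum.notMem_iff.mpr (isUnit_of_subsingleton _)) hμ
    rw [Set.eq_empty_iff_forall_notMem.mpr this]
    exact bddAbove_empty
  · have : Nonempty (Fin n) := ⟨⟨0, hpos⟩⟩
    refine ⟨‖M.map (fun x => (x : ℂ))‖, ?_⟩
    rintro r ⟨μ, hμ, rfl⟩
    have := spectrum.norm_le_norm_of_mem hμ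
    simpa using this

private lemma norm_mem_specRad_set (M : Matrix (Fin n) (Fin n) ℝ) {μ : ℂ}
    (hμ : μ ∈ spectrum ℂ (M.map (fun x => (x : ℂ)))) :
    ‖μ‖ ≤ specRad M :=
  le_csSup (specRad_bddAbove M) ⟨μ, hμ, rfl⟩

/-- Entries of powers of an entrywise-nonnegative matrix are nonnegative. -/
private lemma pow_entry_nonneg {B : Matrix (Fin n) (Fin n) ℝ} (hB : ∀ i j, 0 ≤ B i j) :
    ∀ k i j, 0 ≤ (B ^ k) i j := by
  intro k
  induction k with
  | zero =>
    intro i j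
    by_cases h : i = j <;> simp [pow_zero, Matrix.one_apply, h]
  | succ k ih =>
    intro i j
    rw [pow_succ, Matrix.mul_apply]
    exact Finset.sum_nonneg fun l _ => mul_nonneg (ih i l) (hB l j)

private lemma mulVec_pow_ge {B : Matrix (Fin n) (Fin n) ℝ} (hB : ∀ i j, 0 ≤ B i j)
    {y : Fin n → ℝ} (hy : ∀ i, 0 ≤ y i) (hle : ∀ i, y i ≤ B.mulVec y i) :
    ∀ k i, y i ≤ (B ^ k).mulVec y i := by
  intro k
  induction k with
  | zero => intro i; simp [pow_zero, Matrix.one_mulVec]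
  | succ k ih =>
    intro i
    have h1 : (B ^ (k + 1)).mulVec y = B.mulVec ((B ^ k).mulVec y) := by
      rw [pow_succ']
      rw [Matrix.mulVec_mulVec]
    rw [h1]
    calc y i ≤ B.mulVec y i := hle i
      _ ≤ B.mulVec ((B ^ k).mulVec y) i := by
          simp only [Matrix.mulVec, dotProduct]
          exact Finset.sum_le_sum fun j _ =>
            mul_le_mul_of_nonneg_left (ih j) (hB i j)

/-- Key Perron-type lemma: if `0 ≤ B` entrywise and `y ≤ B y` componentwise for some
nonnegative nonzero `y`, then the (complex) spectral radius of `B` is at least 1. -/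
private lemma one_le_spectralRadius {B : Matrix (Fin n) (Fin n) ℝ} (hB : ∀ i j, 0 ≤ B i j)
    {y : Fin n → ℝ} (hy : ∀ i, 0 ≤ y i) {i0 : Fin n} (hi0 : 0 < y i0)
    (hle : ∀ i, y i ≤ B.mulVec y i) :
    (1 : ℝ≥0∞) ≤ spectralRadius ℂ (B.map (fun x => (x : ℂ))) := by
  set S : ℝ := ∑ j, y j with hS
  have hSpos : 0 < S := by
    have h : y i0 ≤ S := Finset.single_le_sum (fun j _ => hy j) (Finset.mem_univ i0)
    exact lt_of_lt_of_le hi0 h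
  set c : ℝ := y i0 / S with hc
  have hcpos : 0 < c := div_pos hi0 hSpos
  -- norm lower bound for all powers
  have hnorm : ∀ k : ℕ, c ≤ ‖B ^ k‖ := by
    intro k
    have h1 : y i0 ≤ (B ^ k).mulVec y i0 := mulVec_pow_ge hB hy hle k i0
    have h2 : (B ^ k).mulVec y i0 ≤ ‖B ^ k‖ * S := by
      have hrow : ∀ j, (B ^ k) i0 j ≤ ‖B ^ k‖ := by
        intro j
        have h3 : ‖(B ^ k) i0 j‖₊ ≤ ‖B ^ k‖₊ :=
          le_trans (Finset.single_le_sum (f := fun j => ‖(B ^ k) i0 j‖₊)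
            (fun j _ => zero_le) (Finset.mem_univ j)) (row_sum_le_nnnorm _ i0)
        calc (B ^ k) i0 j ≤ |(B ^ k) i0 j| := le_abs_self _
          _ = ‖(B ^ k) i0 j‖ := rfl
          _ ≤ ‖B ^ k‖ := h3
      calc (B ^ k).mulVec y i0 = ∑ j, (B ^ k) i0 j * y j := rfl
        _ ≤ ∑ j, ‖B ^ k‖ * y j := Finset.sum_le_sum fun j _ =>
            mul_le_mul_of_nonneg_right (hrow j) (hy j)
        _ = ‖B ^ k‖ * S := by rw [← Finset.mul_sum]
    rw [hc, div_le_iff₀ hSpos]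
    exact le_trans h1 h2
  -- transfer to the complex matrix
  set B' := B.map (fun x => (x : ℂ)) with hB'
  have hpow : ∀ k : ℕ, ‖B' ^ k‖₊ = ‖B ^ k‖₊ := by
    intro k
    have : B' ^ k = (B ^ k).map (fun x => (x : ℂ)) := by
      rw [hB']
      induction k with
      | zero => simp [pow_zero, Matrix.map_one (fun x : ℝ => (x : ℂ)) Complex.ofReal_zero
          Complex.ofReal_one]
      | succ k ih =>
        rw [pow_succ, pow_succ, ih]
        exact (Matrix.map_mul (L := B ^ k) (M := B) (f := Complex.ofRealHom)).symm
    rw [this, nnnorm_mapC]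
  -- Gelfand's formula
  have hG := spectrum.pow_nnnorm_pow_one_div_tendsto_nhds_spectralRadius B'
  have hg : Tendsto (fun k : ℕ => (ENNReal.ofReal c) ^ (1 / (k : ℕ) : ℝ)) atTop (𝓝 1) := by
    have h1 : Tendsto (fun k : ℕ => (1 / (k : ℕ) : ℝ)) atTop (𝓝 0) :=
      tendsto_one_div_atTop_nhds_zero_nat
    have h2 : ContinuousAt (fun z : ℝ => ENNReal.ofReal (c ^ z)) 0 :=
      (ENNReal.continuous_ofReal.continuousAt).comp
        (Real.continuousAt_const_rpow hcpos.ne')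
    have h3 := h2.tendsto.comp h1
    simp only [Function.comp, Real.rpow_zero, ENNReal.ofReal_one] at h3
    convert h3 using 2 with k
    exact ENNReal.ofReal_rpow_of_pos hcpos
  refine le_of_tendsto_of_tendsto' hg hG fun k => ?_
  apply ENNReal.rpow_le_rpow _ (by positivity)
  rw [hpow k, ← ENNReal.ofReal_coe_nnreal, coe_nnnorm]
  exact ENNReal.ofReal_le_ofReal (hnorm k)

end Aux

theorem regRad_lower_bound {n : ℕ} (A Δ : Matrix (Fin n) (Fin n) ℝ)
    (hA : A.det ≠ 0) (hΔ : ∀ i j, 0 ≤ Δ i j) :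
    (∀ δ : ℝ≥0, (δ : ℝ) * specRad ((A⁻¹).map (fun x => |x|) * Δ) < 1 →
      ∀ M : Matrix (Fin n) (Fin n) ℝ,
        (∀ i j, |M i j - A i j| ≤ (δ : ℝ) * Δ i j) → M.det ≠ 0) ∧
    (ENNReal.ofReal (specRad ((A⁻¹).map (fun x => |x|) * Δ)))⁻¹ ≤ regRad A Δ := by
  set B := (A⁻¹).map (fun x => |x|) * Δ with hBdef
  have hBnn : ∀ i j, 0 ≤ B i j := by
    intro i j
    rw [hBdef, Matrix.mul_apply]
    exact Finset.sum_nonneg fun k _ =>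
      mul_nonneg (by simp [Matrix.map_apply, abs_nonneg]) (hΔ k j)
  have hAunit : IsUnit A.det := isUnit_iff_ne_zero.mpr hA
  have part1 : ∀ δ : ℝ≥0, (δ : ℝ) * specRad B < 1 →
      ∀ M : Matrix (Fin n) (Fin n) ℝ,
        (∀ i j, |M i j - A i j| ≤ (δ : ℝ) * Δ i j) → M.det ≠ 0 := by
    intro δ hδ M hM hdet
    by_cases hδ0 : δ = 0
    · apply hA
      have hMA : M = A := by
        ext i j
        have := hM i j
        rw [hδ0] at this
        simp only [NNReal.coe_zero, zero_mul] at this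
        have h2 := abs_nonneg (M i j - A i j)
        have : M i j - A i j = 0 := abs_eq_zero.mp (le_antisymm this h2)
        linarith
      rw [← hMA]; exact hdet
    · obtain ⟨x, hx0, hxM⟩ := Matrix.exists_mulVec_eq_zero_iff.mpr hdet
      set y : Fin n → ℝ := fun i => |x i| with hy
      have hynn : ∀ i, 0 ≤ y i := fun i => abs_nonneg _
      obtain ⟨i0, hi0⟩ := Function.ne_iff.mp hx0
      have hi0' : 0 < y i0 := abs_pos.mpr (by simpa using hi0)
      set C := (δ : ℝ) • B with hC
      have hCnn : ∀ i j, 0 ≤ C i j := fun i j => by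
        simpa [hC, Matrix.smul_apply] using mul_nonneg δ.coe_nonneg (hBnn i j)
      have hxeq : ∀ i, x i = ∑ j, (A⁻¹ * (A - M)) i j * x j := by
        have hx : (A⁻¹ * (A - M)).mulVec x = x := by
          rw [← Matrix.mulVec_mulVec, Matrix.sub_mulVec, hxM, sub_zero,
            Matrix.mulVec_mulVec, Matrix.nonsing_inv_mul A hAunit, Matrix.one_mulVec]
        intro i
        conv_lhs => rw [← hx]
        rfl
      have h3 : ∀ i j, |(A⁻¹ * (A - M)) i j| ≤ (δ : ℝ) * B i j := by
        intro i j
        rw [Matrix.mul_apply]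
        refine le_trans (Finset.abs_sum_le_sum_abs _ _) ?_
        have hterm : ∀ k, |A⁻¹ i k * (A - M) k j| ≤ |A⁻¹ i k| * ((δ : ℝ) * Δ k j) := by
          intro k
          rw [abs_mul]
          refine mul_le_mul_of_nonneg_left ?_ (abs_nonneg _)
          rw [Matrix.sub_apply, abs_sub_comm]
          exact hM k j
        refine le_trans (Finset.sum_le_sum fun k _ => hterm k) (le_of_eq ?_)
        rw [hBdef, Matrix.mul_apply, Finset.mul_sum]
        exact Finset.sum_congr rfl fun k _ => by simp [Matrix.map_apply]; ring
      have hkey : ∀ i, y i ≤ C.mulVec y i := by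
        intro i
        calc y i = |∑ j, (A⁻¹ * (A - M)) i j * x j| := by rw [hy]; simp only []; rw [← hxeq i]
          _ ≤ ∑ j, |(A⁻¹ * (A - M)) i j * x j| := Finset.abs_sum_le_sum_abs _ _
          _ = ∑ j, |(A⁻¹ * (A - M)) i j| * y j := Finset.sum_congr rfl fun j _ => abs_mul _ _
          _ ≤ ∑ j, ((δ : ℝ) * B i j) * y j := Finset.sum_le_sum fun j _ =>
              mul_le_mul_of_nonneg_right (h3 i j) (hynn j)
          _ = C.mulVec y i := by
              simp [hC, Matrix.mulVec, dotProduct, Matrix.smul_apply]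
      have h1 : (1 : ℝ≥0∞) ≤ spectralRadius ℂ (C.map (fun x => (x : ℂ))) :=
        one_le_spectralRadius hCnn hynn hi0' hkey
      -- upper bound for the spectral radius of C
      have hδpos : (0 : ℝ) < (δ : ℝ) := lt_of_le_of_ne δ.coe_nonneg
        (fun h => hδ0 (by ext; exact h.symm))
      have hCmap : C.map (fun x => (x : ℂ)) =
          ((δ : ℝ) : ℂ) • (B.map (fun x => (x : ℂ))) := by
        ext i j
        simp [hC, Matrix.map_apply, Matrix.smul_apply, smul_eq_mul, Complex.ofReal_mul]
      have hspec : spectralRadius ℂ (C.map (fun x => (x : ℂ))) ≤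
          ENNReal.ofReal ((δ : ℝ) * specRad B) := by
        rw [spectralRadius]
        refine iSup₂_le fun μ hμ => ?_
        rw [hCmap] at hμ
        have hδC : (((δ : ℝ) : ℂ)) ≠ 0 := by
          simp only [ne_eq, Complex.ofReal_eq_zero]
          exact ne_of_gt hδpos
        set u : ℂˣ := Units.mk0 _ hδC with hu
        set ν : ℂ := (((δ : ℝ) : ℂ))⁻¹ * μ with hν
        have huν : u • ν = μ := by
          simp only [hu, Units.smul_def, Units.val_mk0, smul_eq_mul, hν,
            ← mul_assoc, mul_inv_cancel₀ hδC, one_mul]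
        have hν' : ν ∈ spectrum ℂ (B.map (fun x => (x : ℂ))) := by
          rw [← spectrum.smul_mem_smul_iff (r := u), huν]
          simpa [Units.smul_def, hu] using hμ
        have hνle : ‖ν‖ ≤ specRad B := norm_mem_specRad_set B hν'
        have hnorm : ‖μ‖ = (δ : ℝ) * ‖ν‖ := by
          rw [← huν]
          simp only [Units.smul_def, hu, Units.val_mk0, smul_eq_mul,
            norm_mul, Complex.norm_real, Real.norm_eq_abs]
          rw [_root_.abs_of_pos hδpos]
        rw [← ENNReal.ofReal_coe_nnreal, coe_nnnorm, hnorm]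
        exact ENNReal.ofReal_le_ofReal (mul_le_mul_of_nonneg_left hνle δ.coe_nonneg)
      exact absurd (le_trans h1 hspec) (not_le.mpr (ENNReal.ofReal_lt_one.mpr hδ))
  refine ⟨part1, ?_⟩
  rw [regRad]
  refine le_iInf₂ fun δ hδ => ?_
  obtain ⟨M, hM, hdet⟩ := hδ
  have h1 : (1 : ℝ) ≤ (δ : ℝ) * specRad B := by
    by_contra h
    exact part1 δ (lt_of_not_ge h) M hM hdet
  have hρ : 0 < specRad B := by
    by_contra h
    push_neg at h
    nlinarith [δ.coe_nonneg]
  have h2 : (specRad B)⁻¹ ≤ (δ : ℝ) := by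
    rw [inv_eq_one_div, div_le_iff₀ hρ]
    linarith
  calc (ENNReal.ofReal (specRad B))⁻¹
      = ENNReal.ofReal (specRad B)⁻¹ := (ENNReal.ofReal_inv_of_pos hρ).symm
    _ ≤ ENNReal.ofReal (δ : ℝ) := ENNReal.ofReal_le_ofReal h2
    _ = (δ : ℝ≥0∞) := ENNReal.ofReal_coe_nnreal
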